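/- Suppose a graph G contains a triangle {a,b,c} and at least one additional vertex, and every vertex of G has degree at least 1. Construct the lift F on vertex set V(G) × {0,1,2,3} where for each edge e of G other than the triangle edges e_1={b,c}, e_2={a,c}, e_3={a,b}, the copies {x_i, y_i} are edges of F for all i; and for each triangle edge e_i = {x,y} (i = 1,2,3), the edges {x_0,y_0} and {x_i,y_i} are replaced by {x_0,y_i} and {x_i,y_0}. Then F contains no Hamiltonian cycle. -/

import Mathlib

/-- The lift `F` of `G` over four copies, obtained by twisting the three edges
of the triangle `{a,b,c}` (`e₁ = {b,c}`, `e₂ = {a,c}`, `e₃ = {a,b}`): copies of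
every non-triangle edge connect equal indices; for the triangle edge `eₜ = {x,y}`
(`t = 1,2,3`) the edges `{x₀,y₀}` and `{xₜ,yₜ}` are replaced by the twisted
edges `{x₀,yₜ}` and `{xₜ,y₀}`. -/
def liftF {V : Type*} (G : SimpleGraph V) (a b c : V) : SimpleGraph (V × Fin 4) where
  Adj p q := G.Adj p.1 q.1 ∧
    ((¬ (s(p.1, q.1) = s(b, c) ∨ s(p.1, q.1) = s(a, c) ∨ s(p.1, q.1) = s(a, b)) ∧
        p.2 = q.2) ∨
      (∃ t : Fin 4,
        ((t = 1 ∧ s(p.1, q.1) = s(b, c)) ∨ (t = 2 ∧ s(p.1, q.1) = s(a, c)) ∨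
          (t = 3 ∧ s(p.1, q.1) = s(a, b))) ∧
        ((p.2 = q.2 ∧ p.2 ≠ 0 ∧ p.2 ≠ t) ∨ (p.2 = 0 ∧ q.2 = t) ∨ (p.2 = t ∧ q.2 = 0))))
  symm := by
    constructor
    rintro ⟨u, i⟩ ⟨v, j⟩ ⟨hadj, h⟩
    refine ⟨hadj.symm, ?_⟩
    rcases h with ⟨hne, hij⟩ | ⟨t, ht, hidx⟩
    · refine Or.inl ⟨?_, hij.symm⟩
      rw [Sym2.eq_swap]
      exact hne
    · refine Or.inr ⟨t, ?_, ?_⟩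
      · rw [Sym2.eq_swap]
        exact ht
      · rcases hidx with ⟨h1, h2, h3⟩ | ⟨h1, h2⟩ | ⟨h1, h2⟩
        · subst h1
          exact Or.inl ⟨rfl, h2, h3⟩
        · exact Or.inr (Or.inr ⟨h2, h1⟩)
        · exact Or.inr (Or.inl ⟨h2, h1⟩)
  loopless := by
    constructor
    rintro ⟨u, i⟩ ⟨hadj, -⟩
    exact hadj.ne rfl

section LiftHelpersSec
namespace LiftHelpers

open SimpleGraph Walk

variable {W : Type*} {F : SimpleGraph W}


variable {W : Type*} {F : SimpleGraph W}

lemma countP_cross_parity (f : W → Bool) {u v : W} (w : F.Walk u v) :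
    (w.darts.countP (fun d => f d.fst != f d.snd)) % 2 = (if f u = f v then 0 else 1) := by
  induction w with
  | nil => simp
  | @cons a x c hadj p ih =>
    simp only [Walk.darts_cons, List.countP_cons]
    cases ha : f a <;> cases hx : f x <;> cases hc : f c <;>
      simp_all [Nat.add_mod] <;> omega

lemma all_eq_of_no_cross (f : W → Bool) {u v : W} (w : F.Walk u v)
    (h : ∀ d ∈ w.darts, f d.fst = f d.snd) : ∀ x ∈ w.support, f x = f u := by
  induction w with
  | nil => simp
  | @cons a x c hadj p ih =>
    intro y hy
    have hax : f a = f x := h ⟨(a, x), hadj⟩ (by simp [Walk.darts_cons])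
    rw [Walk.support_cons, List.mem_cons] at hy
    rcases hy with h' | h'
    · simp_all
    · have := ih (fun d hd => h d (by simp [Walk.darts_cons, hd])) y h'
      rw [this, ← hax]


lemma exists_cross (f : W → Bool) {u : W} (w : F.Walk u u)
    {x y : W} (hx : x ∈ w.support) (hy : y ∈ w.support) (hxy : f x ≠ f y) :
    ∃ d ∈ w.darts, f d.fst ≠ f d.snd := by
  by_contra h
  push_neg at h
  have hall := all_eq_of_no_cross f w (fun d hd => h d hd)
  exact hxy ((hall x hx).trans (hall y hy).symm)

lemma exists_two_cross (f : W → Bool) {u : W} (w : F.Walk u u)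
    (hnd : w.darts.Nodup) {x y : W} (hx : x ∈ w.support) (hy : y ∈ w.support)
    (hxy : f x ≠ f y) :
    ∃ d₁ ∈ w.darts, ∃ d₂ ∈ w.darts, d₁ ≠ d₂ ∧
      f d₁.fst ≠ f d₁.snd ∧ f d₂.fst ≠ f d₂.snd := by
  have hpar := countP_cross_parity (F := F) f w
  rw [if_pos rfl] at hpar
  obtain ⟨d, hd, hdc⟩ := exists_cross f w hx hy hxy
  have h1 : 0 < w.darts.countP (fun d => f d.fst != f d.snd) :=
    List.countP_pos_iff.mpr ⟨d, hd, by simpa using hdc⟩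
  have h2 : 2 ≤ w.darts.countP (fun d => f d.fst != f d.snd) := by omega
  rw [List.countP_eq_length_filter] at h2
  set l := w.darts.filter (fun d => f d.fst != f d.snd) with hl
  have hlnd : l.Nodup := hnd.filter _
  have hsub : ∀ e ∈ l, e ∈ w.darts ∧ f e.fst ≠ f e.snd := by
    intro e he
    have := List.mem_filter.mp he
    exact ⟨this.1, by simpa using this.2⟩
  match hle : l, h2, hlnd, hsub with
  | d₁ :: d₂ :: t, _, hlnd, hsub =>
    obtain ⟨m1, c1⟩ := hsub d₁ (by simp)
    obtain ⟨m2, c2⟩ := hsub d₂ (by simp)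
    refine ⟨d₁, m1, d₂, m2, ?_, c1, c2⟩
    intro h
    exact (List.nodup_cons.mp hlnd).1 (h ▸ (List.mem_cons_self (a := d₂) (l := t)))

lemma darts_fst_nodup {u : W} {w : F.Walk u u} (hc : w.IsCycle) :
    (w.darts.map (·.fst)).Nodup := by
  rw [Walk.map_fst_darts]
  have hnil : w.support.tail ≠ [] := by
    have := hc.not_nil
    cases w with
    | nil => simp at this
    | cons h p => simp [Walk.support_cons]
  have htnd : w.support.tail.Nodup := hc.support_nodup
  have hsupp : w.support = u :: w.support.tail := w.support_eq_cons
  rw [hsupp, List.dropLast_cons_of_ne_nil hnil]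
  refine List.nodup_cons.mpr ⟨?_, htnd.sublist (List.dropLast_sublist _)⟩
  intro hmem
  have hlast : w.support.tail.getLast hnil = u := by
    rw [List.getLast_tail]
    exact w.getLast_support
  have := (List.dropLast_append_getLast hnil) ▸ htnd
  rw [List.nodup_append] at this
  exact this.2.2 u hmem u (by rw [hlast]; exact List.mem_singleton_self u) rfl

lemma no_three_edges {u : W} {w : F.Walk u u} (hc : w.IsCycle)
    {z : W} {e₁ e₂ e₃ : Sym2 W} (h₁ : e₁ ∈ w.edges) (h₂ : e₂ ∈ w.edges) (h₃ : e₃ ∈ w.edges)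
    (d12 : e₁ ≠ e₂) (d13 : e₁ ≠ e₃) (d23 : e₂ ≠ e₃)
    (hz₁ : z ∈ e₁) (hz₂ : z ∈ e₂) (hz₃ : z ∈ e₃) : False := by
  have hend : (w.darts.map Dart.edge).Nodup := hc.isTrail.edges_nodup
  obtain ⟨D₁, hD₁, hE₁⟩ := List.mem_map.mp h₁
  obtain ⟨D₂, hD₂, hE₂⟩ := List.mem_map.mp h₂
  obtain ⟨D₃, hD₃, hE₃⟩ := List.mem_map.mp h₃
  have hfst := darts_fst_nodup hc
  have hsnd : (w.darts.map (·.snd)).Nodup := by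
    rw [Walk.map_snd_darts]; exact hc.support_nodup
  have injE := List.inj_on_of_nodup_map hend
  have injF := List.inj_on_of_nodup_map hfst
  have injS := List.inj_on_of_nodup_map hsnd
  have hmz : ∀ (D : F.Dart) (e : Sym2 W), D.edge = e → z ∈ e → z = D.fst ∨ z = D.snd := by
    intro D e he hz
    rw [← he] at hz
    exact Sym2.mem_iff.mp hz
  have key : ∀ (Da Db : F.Dart), Da ∈ w.darts → Db ∈ w.darts → Da.edge ≠ Db.edge →
      (z = Da.fst ∨ z = Da.snd) → (z = Db.fst ∨ z = Db.snd) →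
      (z = Da.fst ∧ z = Db.fst → False) ∧ (z = Da.snd ∧ z = Db.snd → False) := by
    intro Da Db ma mb hne _ _
    constructor
    · rintro ⟨ha, hb⟩
      exact hne (congrArg Dart.edge (injF ma mb (ha.symm.trans hb)))
    · rintro ⟨ha, hb⟩
      exact hne (congrArg Dart.edge (injS ma mb (ha.symm.trans hb)))
  have p1 := hmz D₁ e₁ hE₁ hz₁
  have p2 := hmz D₂ e₂ hE₂ hz₂
  have p3 := hmz D₃ e₃ hE₃ hz₃
  have n12 : D₁.edge ≠ D₂.edge := by rw [hE₁, hE₂]; exact d12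
  have n13 : D₁.edge ≠ D₃.edge := by rw [hE₁, hE₃]; exact d13
  have n23 : D₂.edge ≠ D₃.edge := by rw [hE₂, hE₃]; exact d23
  obtain ⟨k12f, k12s⟩ := key D₁ D₂ hD₁ hD₂ n12 p1 p2
  obtain ⟨k13f, k13s⟩ := key D₁ D₃ hD₁ hD₃ n13 p1 p3
  obtain ⟨k23f, k23s⟩ := key D₂ D₃ hD₂ hD₃ n23 p2 p3
  rcases p1 with q1 | q1 <;> rcases p2 with q2 | q2 <;> rcases p3 with q3 | q3 <;>
    first
      | exact k12f ⟨q1, q2⟩ | exact k12s ⟨q1, q2⟩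
      | exact k13f ⟨q1, q3⟩ | exact k13s ⟨q1, q3⟩
      | exact k23f ⟨q2, q3⟩ | exact k23s ⟨q2, q3⟩

variable {V : Type*} [DecidableEq V] {G : SimpleGraph V} {a b c : V}

lemma cross_classify {t : Fin 4} {x y : V}
    (hcase : ∀ u v : V, ((t = 1 ∧ s(u,v) = s(b,c)) ∨ (t = 2 ∧ s(u,v) = s(a,c)) ∨
        (t = 3 ∧ s(u,v) = s(a,b))) → s(u,v) = s(x,y))
    (ht0 : t ≠ 0)
    {p q : V × Fin 4} (h : (liftF G a b c).Adj p q) (hp : p.2 = t) (hq : q.2 ≠ t) :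
    s(p, q) = s((x, t), (y, 0)) ∨ s(p, q) = s((y, t), (x, 0)) := by
  obtain ⟨hG, hA | ⟨s, hs, hi⟩⟩ := h
  · exact absurd (hA.2 ▸ hp) hq
  · rcases hi with ⟨h1, _, _⟩ | ⟨h1, _⟩ | ⟨h1, h2⟩
    · exact absurd (h1 ▸ hp) hq
    · exact absurd (h1 ▸ hp : (0 : Fin 4) = t) (Ne.symm ht0)
    · have hst : s = t := h1 ▸ hp
      subst hst
      have hxy := hcase p.1 q.1 hs
      rcases Sym2.eq_iff.mp hxy with ⟨hx, hy⟩ | ⟨hx, hy⟩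
      · left
        rw [show p = (x, s) from Prod.ext_iff.mpr ⟨hx, hp⟩,
          show q = (y, 0) from Prod.ext_iff.mpr ⟨hy, h2⟩]
      · right
        rw [show p = (y, s) from Prod.ext_iff.mpr ⟨hx, hp⟩,
          show q = (x, 0) from Prod.ext_iff.mpr ⟨hy, h2⟩]

lemma both_mem {u : V × Fin 4} {w : (liftF G a b c).Walk u u}
    (hcyc : w.IsCycle) (hnd : w.darts.Nodup)
    (hend : (w.darts.map SimpleGraph.Dart.edge).Nodup)
    (hsupp : ∀ v, v ∈ w.support)
    {t : Fin 4} {x y : V}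
    (hcase : ∀ u v : V, ((t = 1 ∧ s(u,v) = s(b,c)) ∨ (t = 2 ∧ s(u,v) = s(a,c)) ∨
        (t = 3 ∧ s(u,v) = s(a,b))) → s(u,v) = s(x,y))
    (ht0 : t ≠ 0) :
    s((x,t),(y,0)) ∈ w.edges ∧ s((y,t),(x,0)) ∈ w.edges := by
  obtain ⟨d₁, m1, d₂, m2, hne, c1, c2⟩ :=
    exists_two_cross (fun p => decide (p.2 = t)) w hnd
      (hsupp (x, t)) (hsupp (x, 0)) (by simp [Ne.symm ht0])
  have cls : ∀ D : (liftF G a b c).Dart, D ∈ w.darts →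
      (decide (D.fst.2 = t) : Bool) ≠ decide (D.snd.2 = t) →
      D.edge = s((x,t),(y,0)) ∨ D.edge = s((y,t),(x,0)) := by
    intro D hD hcr
    by_cases hf : D.fst.2 = t
    · have hq : D.snd.2 ≠ t := by
        intro hq; rw [hf, hq] at hcr; exact hcr rfl
      exact cross_classify hcase ht0 D.adj hf hq
    · have hq : D.snd.2 = t := by
        by_contra hq; rw [decide_eq_false hf, decide_eq_false hq] at hcr; exact hcr rfl
      have := cross_classify hcase ht0 D.adj.symm hq hf
      rw [show SimpleGraph.Dart.edge D = s(D.snd, D.fst) from Sym2.eq_swap.symm]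
      exact this
  have injE := List.inj_on_of_nodup_map hend
  have e1 := cls d₁ m1 c1
  have e2 := cls d₂ m2 c2
  have hmem1 : d₁.edge ∈ w.edges := List.mem_map_of_mem m1
  have hmem2 : d₂.edge ∈ w.edges := List.mem_map_of_mem m2
  have hnee : d₁.edge ≠ d₂.edge := fun h => hne (injE m1 m2 h)
  rcases e1 with e1 | e1 <;> rcases e2 with e2 | e2
  · exact absurd (e1.trans e2.symm) hnee
  · exact ⟨e1 ▸ hmem1, e2 ▸ hmem2⟩
  · exact ⟨e2 ▸ hmem2, e1 ▸ hmem1⟩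
  · exact absurd (e1.trans e2.symm) hnee



end LiftHelpers
end LiftHelpersSec

open LiftHelpers in
/-- If `G` contains a triangle `{a,b,c}`, has at least one additional vertex,
and every vertex has degree at least 1, then the lift `F` obtained by twisting
the triangle edges contains no Hamiltonian cycle. -/
theorem liftF_not_hamiltonian {V : Type*} [Fintype V] [DecidableEq V]
    (G : SimpleGraph V) (a b c d : V)
    (hab : G.Adj a b) (hac : G.Adj a c) (hbc : G.Adj b c)
    (hda : d ≠ a) (hdb : d ≠ b) (hdc : d ≠ c)
    (hdeg : ∀ v : V, ∃ u : V, G.Adj v u) :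
    ∀ (p : V × Fin 4) (w : (liftF G a b c).Walk p p), ¬ w.IsHamiltonianCycle := by
  intro r w hw
  classical
  have hcyc := hw.isCycle
  have hend : (w.darts.map SimpleGraph.Dart.edge).Nodup :=
    hcyc.isCircuit.isTrail.edges_nodup
  have hnd : w.darts.Nodup := hend.of_map
  have hsupp : ∀ v, v ∈ w.support := hw.mem_support
  have hc1 : ∀ u v : V, (((1 : Fin 4) = 1 ∧ s(u,v) = s(b,c)) ∨ ((1:Fin 4) = 2 ∧ s(u,v) = s(a,c))
      ∨ ((1:Fin 4) = 3 ∧ s(u,v) = s(a,b))) → s(u,v) = s(b,c) := by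
    rintro u v (⟨-, h⟩ | ⟨h1, -⟩ | ⟨h1, -⟩)
    · exact h
    · exact absurd h1 (by decide)
    · exact absurd h1 (by decide)
  have hc2 : ∀ u v : V, (((2 : Fin 4) = 1 ∧ s(u,v) = s(b,c)) ∨ ((2:Fin 4) = 2 ∧ s(u,v) = s(a,c))
      ∨ ((2:Fin 4) = 3 ∧ s(u,v) = s(a,b))) → s(u,v) = s(a,c) := by
    rintro u v (⟨h1, -⟩ | ⟨-, h⟩ | ⟨h1, -⟩)
    · exact absurd h1 (by decide)
    · exact h
    · exact absurd h1 (by decide)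
  have hc3 : ∀ u v : V, (((3 : Fin 4) = 1 ∧ s(u,v) = s(b,c)) ∨ ((3:Fin 4) = 2 ∧ s(u,v) = s(a,c))
      ∨ ((3:Fin 4) = 3 ∧ s(u,v) = s(a,b))) → s(u,v) = s(a,b) := by
    rintro u v (⟨h1, -⟩ | ⟨h1, -⟩ | ⟨-, h⟩)
    · exact absurd h1 (by decide)
    · exact absurd h1 (by decide)
    · exact h
  obtain ⟨M1, M1'⟩ := both_mem hcyc hnd hend hsupp hc1 (by decide)
  obtain ⟨M2, M2'⟩ := both_mem hcyc hnd hend hsupp hc2 (by decide)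
  obtain ⟨M3, M3'⟩ := both_mem hcyc hnd hend hsupp hc3 (by decide)
  obtain ⟨D, hD, hDc⟩ := exists_cross
      (fun z : V × Fin 4 => decide (z.2 = 0 ∧ z.1 ≠ a ∧ z.1 ≠ b ∧ z.1 ≠ c)) w
      (hsupp (d, 0)) (hsupp (a, 0)) (by simp [hda, hdb, hdc])
  obtain ⟨P, Q, hadj, hedge, hfP, hfQ⟩ :
      ∃ P Q : V × Fin 4, (liftF G a b c).Adj P Q ∧ s(P, Q) ∈ w.edges ∧
        (P.2 = 0 ∧ P.1 ≠ a ∧ P.1 ≠ b ∧ P.1 ≠ c) ∧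
        ¬(Q.2 = 0 ∧ Q.1 ≠ a ∧ Q.1 ≠ b ∧ Q.1 ≠ c) := by
    by_cases hf : D.fst.2 = 0 ∧ D.fst.1 ≠ a ∧ D.fst.1 ≠ b ∧ D.fst.1 ≠ c
    · refine ⟨D.fst, D.snd, D.adj, List.mem_map_of_mem hD, hf, ?_⟩
      intro hq
      rw [decide_eq_true hf, decide_eq_true hq] at hDc
      exact hDc rfl
    · have hq : D.snd.2 = 0 ∧ D.snd.1 ≠ a ∧ D.snd.1 ≠ b ∧ D.snd.1 ≠ c := by
        by_contra hq
        rw [decide_eq_false hf, decide_eq_false hq] at hDc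
        exact hDc rfl
      refine ⟨D.snd, D.fst, D.adj.symm, ?_, hq, hf⟩
      rw [Sym2.eq_swap]
      exact List.mem_map_of_mem hD
  obtain ⟨hP2, hPa, hPb, hPc⟩ := hfP
  obtain ⟨hG, hA | ⟨s, hs, -⟩⟩ := hadj
  · -- untwisted edge: Q.2 = 0, Q.1 ∈ {a,b,c}
    have hQ2 : Q.2 = 0 := hA.2.symm.trans hP2
    push_neg at hfQ
    have hQabc : Q.1 = a ∨ Q.1 = b ∨ Q.1 = c := by
      by_cases h1 : Q.1 = a
      · exact Or.inl h1
      by_cases h2 : Q.1 = b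
      · exact Or.inr (Or.inl h2)
      exact Or.inr (Or.inr (hfQ hQ2 h1 h2))
    rcases hQabc with hQ1 | hQ1 | hQ1
    · have hQ : Q = (a, 0) := Prod.ext_iff.mpr ⟨hQ1, hQ2⟩
      rw [hQ] at hedge
      refine no_three_edges (z := ((a : V), (0 : Fin 4))) hcyc hedge M2' M3' ?_ ?_ ?_ ?_ ?_ ?_
      · simp [Sym2.eq_iff, Prod.ext_iff, hP2, hPa, hPc]
      · simp [Sym2.eq_iff, Prod.ext_iff, hP2, hPa, hPb]
      · simp [Sym2.eq_iff, Prod.ext_iff]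
      · exact Sym2.mem_iff.mpr (Or.inr rfl)
      · exact Sym2.mem_iff.mpr (Or.inr rfl)
      · exact Sym2.mem_iff.mpr (Or.inr rfl)
    · have hQ : Q = (b, 0) := Prod.ext_iff.mpr ⟨hQ1, hQ2⟩
      rw [hQ] at hedge
      refine no_three_edges (z := ((b : V), (0 : Fin 4))) hcyc hedge M1' M3 ?_ ?_ ?_ ?_ ?_ ?_
      · simp [Sym2.eq_iff, Prod.ext_iff, hP2, hPb, hPc]
      · simp [Sym2.eq_iff, Prod.ext_iff, hP2, hPa, hPb]
      · simp [Sym2.eq_iff, Prod.ext_iff]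
      · exact Sym2.mem_iff.mpr (Or.inr rfl)
      · exact Sym2.mem_iff.mpr (Or.inr rfl)
      · exact Sym2.mem_iff.mpr (Or.inr rfl)
    · have hQ : Q = (c, 0) := Prod.ext_iff.mpr ⟨hQ1, hQ2⟩
      rw [hQ] at hedge
      refine no_three_edges (z := ((c : V), (0 : Fin 4))) hcyc hedge M1 M2 ?_ ?_ ?_ ?_ ?_ ?_
      · simp [Sym2.eq_iff, Prod.ext_iff, hP2, hPb, hPc]
      · simp [Sym2.eq_iff, Prod.ext_iff, hP2, hPa, hPc]
      · simp [Sym2.eq_iff, Prod.ext_iff]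
      · exact Sym2.mem_iff.mpr (Or.inr rfl)
      · exact Sym2.mem_iff.mpr (Or.inr rfl)
      · exact Sym2.mem_iff.mpr (Or.inr rfl)
  · -- twisted edge: impossible since P.1 ∉ {a,b,c}
    rcases hs with ⟨-, h⟩ | ⟨-, h⟩ | ⟨-, h⟩ <;>
      rcases Sym2.eq_iff.mp h with ⟨h1, -⟩ | ⟨h1, -⟩ <;>
      first
        | exact hPa h1
        | exact hPb h1
        | exact hPc h1
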